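/- Let J be a finite type, and for each j ∈ J let B_j be a unital ℂ-algebra, φ_j : B_j → ℂ a ℂ-linear functional with φ_j(1) = 1, and P_j ∈ B_j an idempotent separating φ_j. Let φ = ⨂_{j∈J} φ_j be the tensor product functional on the tensor product algebra ⨂_{j∈J} B_j, determined by φ(⨂_{j∈J} x_j) = ∏_{j∈J} φ_j(x_j). Then the element P = ⨂_{j∈J} P_j is an idempotent separating φ: P·P = P, φ(P) = 1, and φ(X · P · Y) = φ(X) · φ(Y) for all X, Y ∈ ⨂_{j∈J} B_j. -/
import Mathlib


open scoped TensorProduct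

/-- the tensor product of separating idempotents is a separating
idempotent for the tensor product functional (Remark 3.2 of the paper). -/
theorem tensor_of_separating_idempotents_separates
    {J : Type*} [Fintype J]
    (B : J → Type*) [∀ j, Ring (B j)] [∀ j, Algebra ℂ (B j)]
    (φj : ∀ j, B j →ₗ[ℂ] ℂ)
    (hφj1 : ∀ j, φj j 1 = 1)
    (Pj : ∀ j, B j)
    (hPidem : ∀ j, Pj j * Pj j = Pj j)
    (hP1 : ∀ j, φj j (Pj j) = 1)
    (hPsep : ∀ j, ∀ x y : B j, φj j (x * Pj j * y) = φj j x * φj j y)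
    (φ : (⨂[ℂ] j, B j) →ₗ[ℂ] ℂ)
    (hφ : ∀ v : (j : J) → B j, φ (⨂ₜ[ℂ] j, v j) = ∏ j, φj j (v j)) :
    (⨂ₜ[ℂ] j, Pj j) * (⨂ₜ[ℂ] j, Pj j) = (⨂ₜ[ℂ] j, Pj j)
    ∧ φ (⨂ₜ[ℂ] j, Pj j) = 1
    ∧ ∀ X Y : ⨂[ℂ] j, B j, φ (X * (⨂ₜ[ℂ] j, Pj j) * Y) = φ X * φ Y := by
  refine ⟨?_, ?_, ?_⟩
  · rw [PiTensorProduct.tprod_mul_tprod]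
    exact congrArg _ (funext fun j => hPidem j)
  · simp [hφ, hP1]
  · intro X Y
    induction X using PiTensorProduct.induction_on with
    | smul_tprod r x =>
      induction Y using PiTensorProduct.induction_on with
      | smul_tprod s y =>
        have hp : ∏ j, φj j (x j * Pj j * y j)
            = (∏ j, φj j (x j)) * ∏ j, φj j (y j) := by
          rw [← Finset.prod_mul_distrib]
          exact Finset.prod_congr rfl fun j _ => hPsep j (x j) (y j)
        simp only [smul_mul_assoc, mul_smul_comm, map_smul,
          PiTensorProduct.tprod_mul_tprod, hφ, smul_eq_mul, Pi.mul_apply, hp]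
        ring
      | add Y1 Y2 h1 h2 =>
        simp only [mul_add, map_add, h1, h2]
    | add X1 X2 h1 h2 =>
      simp only [add_mul, map_add, h1, h2]
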